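/- For two orthogonal projections P and Q on a finite-dimensional Hilbert space, P and Q commute if and only if Null(PQP) = Null(P) + Null(Q). -/

import Mathlib

open scoped ComplexOrder
open scoped Matrix

/-- The kernel of a matrix, as a subspace of Euclidean space. -/
noncomputable def mker {n : Type*} [Fintype n] [DecidableEq n] (X : Matrix n n ℂ) :
    Submodule ℂ (EuclideanSpace ℂ n) :=
  LinearMap.ker (Matrix.toEuclideanLin X)

lemma mem_mker {n : Type*} [Fintype n] [DecidableEq n] (X : Matrix n n ℂ)
    (v : n → ℂ) : (WithLp.equiv 2 (n → ℂ)).symm v ∈ mker X ↔ X.mulVec v = 0 := by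
  rw [mker, LinearMap.mem_ker, WithLp.equiv_symm_apply, Matrix.toEuclideanLin_apply_piLp_toLp]
  constructor
  · intro h
    have := congrArg (WithLp.equiv 2 (n → ℂ)) h
    simpa using this
  · intro h
    rw [h]
    simp

lemma matrix_eq_of_mulVec {n : Type*} [Fintype n] [DecidableEq n] {X Y : Matrix n n ℂ}
    (h : ∀ v : n → ℂ, X.mulVec v = Y.mulVec v) : X = Y := by
  apply (Matrix.toLin' (R := ℂ) (n := n)).injective
  exact LinearMap.ext fun v => by simpa [Matrix.toLin'_apply] using h v

/-- Two orthogonal projections P and Q commute iff Null(PQP) = Null(P) + Null(Q). -/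
theorem proj_commute_iff_ker_sup
    {n : Type*} [Fintype n] [DecidableEq n]
    (P Q : Matrix n n ℂ)
    (hPherm : P.IsHermitian) (hPidem : P * P = P)
    (hQherm : Q.IsHermitian) (hQidem : Q * Q = Q) :
    P * Q = Q * P ↔ mker (P * Q * P) = mker P ⊔ mker Q := by
  have hfact : P * Q * P = (Q * P)ᴴ * (Q * P) := by
    rw [Matrix.conjTranspose_mul, hPherm.eq, hQherm.eq, ← mul_assoc (P * Q) Q P,
      mul_assoc P Q Q, hQidem]
  have key : ∀ v : n → ℂ, (P * Q * P).mulVec v = 0 ↔ (Q * P).mulVec v = 0 := by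
    intro v
    rw [hfact]
    exact Matrix.conjTranspose_mul_self_mulVec_eq_zero (Q * P) v
  constructor
  · intro h
    apply le_antisymm
    · intro x hx
      rw [← (WithLp.equiv 2 (n → ℂ)).symm_apply_apply x] at hx ⊢
      set v := (WithLp.equiv 2 (n → ℂ)) x with hv
      rw [mem_mker, key] at hx
      have h1 : (WithLp.equiv 2 (n → ℂ)).symm (v - P.mulVec v) ∈ mker P := by
        rw [mem_mker, Matrix.mulVec_sub, Matrix.mulVec_mulVec, hPidem, sub_self]
      have h2 : (WithLp.equiv 2 (n → ℂ)).symm (P.mulVec v) ∈ mker Q := by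
        rw [mem_mker, Matrix.mulVec_mulVec]
        exact hx
      have hsum := Submodule.add_mem_sup h1 h2
      rwa [show (WithLp.equiv 2 (n → ℂ)).symm (v - P.mulVec v)
            + (WithLp.equiv 2 (n → ℂ)).symm (P.mulVec v)
          = (WithLp.equiv 2 (n → ℂ)).symm v from by
        rw [WithLp.equiv_symm_apply, ← WithLp.toLp_add, sub_add_cancel]] at hsum
    · rw [sup_le_iff]
      constructor
      · intro x hx
        rw [← (WithLp.equiv 2 (n → ℂ)).symm_apply_apply x] at hx ⊢
        set v := (WithLp.equiv 2 (n → ℂ)) x with hv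
        rw [mem_mker] at hx ⊢
        rw [← Matrix.mulVec_mulVec, hx, Matrix.mulVec_zero]
      · intro x hx
        rw [← (WithLp.equiv 2 (n → ℂ)).symm_apply_apply x] at hx ⊢
        set v := (WithLp.equiv 2 (n → ℂ)) x with hv
        rw [mem_mker] at hx ⊢
        have hcomm : P * Q * P = P * Q := by
          rw [mul_assoc, ← h, ← mul_assoc, hPidem]
        rw [hcomm, ← Matrix.mulVec_mulVec, hx, Matrix.mulVec_zero]
  · intro h
    have hQP : ∀ v : n → ℂ, Q.mulVec v = 0 → (Q * P).mulVec v = 0 := by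
      intro v hv
      have hmem : (WithLp.equiv 2 (n → ℂ)).symm v ∈ mker Q := by
        rw [mem_mker]; exact hv
      have : (WithLp.equiv 2 (n → ℂ)).symm v ∈ mker (P * Q * P) := by
        rw [h]; exact Submodule.mem_sup_right hmem
      rw [mem_mker] at this
      exact (key v).mp this
    have heq : Q * P = Q * P * Q := by
      apply matrix_eq_of_mulVec
      intro v
      have hz : Q.mulVec (v - Q.mulVec v) = 0 := by
        rw [Matrix.mulVec_sub, Matrix.mulVec_mulVec, hQidem, sub_self]
      have h0 := hQP (v - Q.mulVec v) hz
      rw [Matrix.mulVec_sub, Matrix.mulVec_mulVec, sub_eq_zero] at h0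
      rw [h0, ← Matrix.mulVec_mulVec]
    have hherm : (Q * P * Q)ᴴ = Q * P * Q := by
      rw [Matrix.conjTranspose_mul, Matrix.conjTranspose_mul, hPherm.eq, hQherm.eq, mul_assoc]
    calc P * Q = (Q * P)ᴴ := by
          rw [Matrix.conjTranspose_mul, hPherm.eq, hQherm.eq]
    _ = (Q * P * Q)ᴴ := by rw [← heq]
    _ = Q * P * Q := hherm
    _ = Q * P := heq.symm
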